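/- For u, u₀ in the open unit disk of ℂ, one has 1 - |(u - u₀)/(1 - conj(u₀)·u)| ≤ 2|1 - u|/(1 - |u₀|). -/

import Mathlib

theorem disk_moebius_estimate (u u₀ : ℂ) (hu : ‖u‖ < 1) (hu₀ : ‖u₀‖ < 1) :
    1 - ‖(u - u₀) / (1 - (starRingEnd ℂ) u₀ * u)‖ ≤ 2 * ‖1 - u‖ / (1 - ‖u₀‖) := by
  set c := (starRingEnd ℂ) u₀ with hc
  have hcnorm : ‖c‖ = ‖u₀‖ := RCLike.norm_conj u₀
  have ha0 : (1 - c) ≠ 0 := by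
    rw [sub_ne_zero]
    intro h
    have h1 : (1:ℝ) = ‖u₀‖ := by rw [← hcnorm, ← h, norm_one]
    linarith
  have hcu : ‖c * u‖ < 1 := by
    rw [norm_mul, hcnorm]
    calc ‖u₀‖ * ‖u‖ ≤ 1 * ‖u‖ := by
          apply mul_le_mul_of_nonneg_right hu₀.le (norm_nonneg _)
      _ < 1 := by simpa using hu
  have hb0 : (1 - c * u) ≠ 0 := by
    rw [sub_ne_zero]
    intro h
    rw [← h, norm_one] at hcu
    exact lt_irrefl _ hcu
  have key : (1 - u₀)/(1 - c) - (u - u₀)/(1 - c*u)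
      = (1 - u) * (1 - u₀ * c) / ((1 - c) * (1 - c * u)) := by
    field_simp
    ring
  have h1 : ‖(1 - u₀)/(1 - c)‖ = 1 := by
    rw [norm_div]
    have heq : ‖1 - c‖ = ‖1 - u₀‖ := by
      rw [hc, show (1 : ℂ) - (starRingEnd ℂ) u₀ = (starRingEnd ℂ) (1 - u₀) by
        simp [map_sub], RCLike.norm_conj]
    have hne : (1:ℂ) - u₀ ≠ 0 := by
      rw [sub_ne_zero]
      intro h
      rw [← h, norm_one] at hu₀
      exact lt_irrefl _ hu₀
    rw [heq, div_self (norm_ne_zero_iff.mpr hne)]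
  have h2 : 1 - ‖(u - u₀) / (1 - c * u)‖
      ≤ ‖(1 - u₀)/(1 - c) - (u - u₀)/(1 - c*u)‖ := by
    rw [← h1]
    exact norm_sub_norm_le _ _
  have hnum : ‖(1:ℂ) - u₀ * c‖ = 1 - ‖u₀‖^2 := by
    have h0 : u₀ * c = ((‖u₀‖^2 : ℝ) : ℂ) := by
      rw [hc, Complex.mul_conj]
      norm_cast
      rw [Complex.normSq_eq_norm_sq]
    rw [h0, show (1:ℂ) - ((‖u₀‖^2 : ℝ) : ℂ) = (((1 - ‖u₀‖^2 : ℝ)) : ℂ) by push_cast; ring,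
      Complex.norm_real, Real.norm_eq_abs, abs_of_nonneg]
    nlinarith [norm_nonneg u₀]
  have h3 : ‖(1 - u) * (1 - u₀ * c) / ((1 - c) * (1 - c * u))‖
      = ‖1 - u‖ * (1 - ‖u₀‖^2) / (‖1 - c‖ * ‖1 - c*u‖) := by
    rw [norm_div, norm_mul, norm_mul, hnum]
  have hA : 1 - ‖u₀‖ ≤ ‖1 - c‖ := by
    have := norm_sub_norm_le (1:ℂ) c
    simpa [hcnorm] using this
  have hB : 1 - ‖u₀‖ ≤ ‖1 - c * u‖ := by
    have h := norm_sub_norm_le (1:ℂ) (c * u)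
    simp only [norm_one] at h
    have : ‖c * u‖ ≤ ‖u₀‖ := by
      rw [norm_mul, hcnorm]
      calc ‖u₀‖ * ‖u‖ ≤ ‖u₀‖ * 1 := by
            apply mul_le_mul_of_nonneg_left hu.le (norm_nonneg _)
        _ = ‖u₀‖ := mul_one _
    linarith
  have ht : (0:ℝ) < 1 - ‖u₀‖ := by linarith
  have hAB : ‖1 - u‖ * (1 - ‖u₀‖^2) / (‖1 - c‖ * ‖1 - c*u‖)
      ≤ 2 * ‖1 - u‖ / (1 - ‖u₀‖) := by
    have hApos : (0:ℝ) < ‖1 - c‖ := lt_of_lt_of_le ht hA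
    have hBpos : (0:ℝ) < ‖1 - c*u‖ := lt_of_lt_of_le ht hB
    rw [div_le_div_iff₀ (by positivity) ht]
    nlinarith [norm_nonneg (1 - u), norm_nonneg u₀,
      mul_le_mul hA hB ht.le (norm_nonneg _),
      mul_nonneg (norm_nonneg (1 - u)) (mul_nonneg (sub_nonneg.mpr hu₀.le) ht.le)]
  calc 1 - ‖(u - u₀) / (1 - c * u)‖
      ≤ ‖(1 - u₀)/(1 - c) - (u - u₀)/(1 - c*u)‖ := h2
    _ = ‖1 - u‖ * (1 - ‖u₀‖^2) / (‖1 - c‖ * ‖1 - c*u‖) := by rw [key, h3]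
    _ ≤ 2 * ‖1 - u‖ / (1 - ‖u₀‖) := hAB
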